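/- Let f : ℤ² → {contact elements} be a discrete channel surface with circular direction '+'. Then f envelopes a one-parameter family of spheres: there exists a map s from ℤ to oriented spheres such that s(n) ⊆ f(m,n) for every m, n ∈ ℤ. -/

import Mathlib

noncomputable section

/-- The Lie sphere geometric model: `ℝ^{4,2}`. -/
abbrev V6 : Type := Fin 6 → ℝ

/-- The symmetric bilinear form of signature `(4,2)` on `V6`. -/
def B (x y : V6) : ℝ :=
  x 0 * y 0 + x 1 * y 1 + x 2 * y 2 + x 3 * y 3 - x 4 * y 4 - x 5 * y 5

/-- An oriented sphere: a 1-dimensional isotropic subspace. -/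
def IsSphere (S : Submodule ℝ V6) : Prop :=
  Module.finrank ℝ S = 1 ∧ ∀ x ∈ S, B x x = 0

/-- A contact element: a 2-dimensional totally isotropic subspace. -/
def IsContact (W : Submodule ℝ V6) : Prop :=
  Module.finrank ℝ W = 2 ∧ ∀ x ∈ W, ∀ y ∈ W, B x y = 0

/-- A `(2,1)`-plane: 3-dim subspace on which the form is nondegenerate of signature `(2,1)`. -/
def IsSig21 (D : Submodule ℝ V6) : Prop :=
  ∃ u v w : V6, D = Submodule.span ℝ {u, v, w} ∧
    B u u = 1 ∧ B v v = 1 ∧ B w w = -1 ∧ B u v = 0 ∧ B u w = 0 ∧ B v w = 0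

/-- A Dupin cyclide: a pair of `(2,1)`-planes, the second the orthogonal complement of the first. -/
def IsDupin (D E : Submodule ℝ V6) : Prop :=
  IsSig21 D ∧ IsSig21 E ∧ ∀ x : V6, x ∈ E ↔ ∀ y ∈ D, B x y = 0

/-- Horizontal curvature sphere on the edge from `(m,n)` to `(m+1,n)`. -/
def sPlus (f : ℤ × ℤ → Submodule ℝ V6) (m n : ℤ) : Submodule ℝ V6 :=
  f (m, n) ⊓ f (m + 1, n)

/-- Vertical curvature sphere on the edge from `(m,n)` to `(m,n+1)`. -/
def sMinus (f : ℤ × ℤ → Submodule ℝ V6) (m n : ℤ) : Submodule ℝ V6 :=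
  f (m, n) ⊓ f (m, n + 1)

/-- A discrete Legendre map. -/
def IsLegendre (f : ℤ × ℤ → Submodule ℝ V6) : Prop :=
  (∀ p : ℤ × ℤ, IsContact (f p)) ∧
  (∀ m n : ℤ, Module.finrank ℝ (sPlus f m n) = 1) ∧
  (∀ m n : ℤ, Module.finrank ℝ (sMinus f m n) = 1)

/-- A face-cyclide congruence for `f`. -/
def IsFaceCyclideCongruence (f D E : ℤ × ℤ → Submodule ℝ V6) : Prop :=
  ∀ m n : ℤ,
    IsDupin (D (m, n)) (E (m, n)) ∧
    sPlus f m n ≤ D (m, n) ∧ sPlus f m (n + 1) ≤ D (m, n) ∧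
    sMinus f m n ≤ E (m, n) ∧ sMinus f (m + 1) n ≤ E (m, n)

/-- A discrete channel surface with circular direction `+`. -/
def IsChannelPlus (f : ℤ × ℤ → Submodule ℝ V6) : Prop :=
  IsLegendre f ∧
  ∃ D E : ℤ × ℤ → Submodule ℝ V6,
    IsFaceCyclideCongruence f D E ∧
    ∀ m m' n : ℤ, D (m, n) = D (m', n) ∧ E (m, n) = E (m', n)

/-- The orthogonal complement of a point sphere complex `p`. -/
def pPerp (p : V6) : Submodule ℝ V6 where
  carrier := {x | B x p = 0}
  add_mem' := by
    intro a b ha hb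
    simp only [Set.mem_setOf_eq, B, Pi.add_apply] at *
    linear_combination ha + hb
  zero_mem' := by simp [B]
  smul_mem' := by
    intro c x hx
    simp only [Set.mem_setOf_eq, B, Pi.smul_apply, smul_eq_mul] at *
    linear_combination c * hx

lemma B_expand (u v w : V6) (a b c a' b' c' : ℝ) :
    B (a • u + b • v + c • w) (a' • u + b' • v + c' • w) =
      a * a' * B u u + a * b' * B u v + a * c' * B u w +
      b * a' * B v u + b * b' * B v v + b * c' * B v w +
      c * a' * B w u + c * b' * B w v + c * c' * B w w := by
  simp only [B, Pi.add_apply, Pi.smul_apply, smul_eq_mul]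
  ring

lemma B_comm (x y : V6) : B x y = B y x := by simp only [B]; ring

lemma mem_span_triple {u v w x : V6} (h : x ∈ Submodule.span ℝ ({u, v, w} : Set V6)) :
    ∃ a b c : ℝ, x = a • u + b • v + c • w := by
  rw [show ({u, v, w} : Set V6) = insert u {v, w} from rfl,
    Submodule.mem_span_insert] at h
  obtain ⟨a, z, hz, hxz⟩ := h
  rw [Submodule.mem_span_pair] at hz
  obtain ⟨b, c, hbc⟩ := hz
  exact ⟨a, b, c, by rw [hxz, ← hbc, add_assoc]⟩

/-- In a (2,1)-plane, two isotropic, mutually orthogonal vectors are dependent. -/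
lemma isotropic_dep {u v w x y : V6}
    (huu : B u u = 1) (hvv : B v v = 1) (hww : B w w = -1)
    (huv : B u v = 0) (huw : B u w = 0) (hvw : B v w = 0)
    (hx : x ∈ Submodule.span ℝ ({u, v, w} : Set V6))
    (hy : y ∈ Submodule.span ℝ ({u, v, w} : Set V6))
    (hxx : B x x = 0) (hyy : B y y = 0) (hxy : B x y = 0) (hy0 : y ≠ 0) :
    ∃ t : ℝ, x = t • y := by
  obtain ⟨a, b, c, rfl⟩ := mem_span_triple hx
  obtain ⟨a', b', c', rfl⟩ := mem_span_triple hy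
  rw [B_expand] at hxx hyy hxy
  rw [huu, hvv, hww, huv, huw, hvw, B_comm v u, B_comm w u, B_comm w v,
    huv, huw, hvw] at hxx hyy hxy
  -- hxx : a*a + b*b = c*c etc (up to form)
  have h1 : a * a + b * b = c * c := by linarith
  have h2 : a' * a' + b' * b' = c' * c' := by linarith
  have h3 : a * a' + b * b' = c * c' := by linarith
  have hne : a' * a' + b' * b' ≠ 0 := by
    intro h0
    have ha' : a' = 0 := by nlinarith [sq_nonneg a', sq_nonneg b']
    have hb' : b' = 0 := by nlinarith [sq_nonneg a', sq_nonneg b']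
    have hc' : c' = 0 := by nlinarith
    exact hy0 (by rw [ha', hb', hc']; simp)
  have hcs : a * b' - b * a' = 0 := by
    have h4 : (a * b' - b * a') ^ 2 = 0 := by
      have : (a * b' - b * a') ^ 2 =
          (a * a + b * b) * (a' * a' + b' * b') - (a * a' + b * b') ^ 2 := by ring
      rw [this, h1, h2, h3]; ring
    exact pow_eq_zero_iff (by norm_num) |>.mp h4
  refine ⟨(a * a' + b * b') / (a' * a' + b' * b'), ?_⟩
  have ha : a = (a * a' + b * b') / (a' * a' + b' * b') * a' := by
    rw [div_mul_eq_mul_div, eq_div_iff hne]; linear_combination b' * hcs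
  have hb : b = (a * a' + b * b') / (a' * a' + b' * b') * b' := by
    rw [div_mul_eq_mul_div, eq_div_iff hne]; linear_combination (-a') * hcs
  have hc : c = (a * a' + b * b') / (a' * a' + b' * b') * c' := by
    rw [div_mul_eq_mul_div, eq_div_iff hne]; linear_combination c * h2 - c' * h3
  rw [smul_add, smul_add, smul_smul, smul_smul, smul_smul]
  rw [← ha, ← hb, ← hc]

/-- A discrete channel surface envelopes a one-parameter family of spheres. -/
theorem channel_surface_envelopes_sphere_family
    (f : ℤ × ℤ → Submodule ℝ V6) (hf : IsChannelPlus f) :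
    ∃ s : ℤ → Submodule ℝ V6, (∀ n : ℤ, IsSphere (s n)) ∧
      ∀ m n : ℤ, s n ≤ f (m, n) := by
  obtain ⟨⟨hcontact, hsp, hsm⟩, D, E, hface, hind⟩ := hf
  have key : ∀ m n : ℤ, sPlus f m n = sPlus f (m + 1) n := by
    intro m n
    obtain ⟨⟨u, v, w, hDspan, huu, hvv, hww, huv, huw, hvw⟩, -, -⟩ := (hface m n).1
    have hD1 : sPlus f m n ≤ D (m, n) := (hface m n).2.1
    have hD2 : sPlus f (m + 1) n ≤ D (m, n) := by
      rw [(hind m (m + 1) n).1]; exact (hface (m + 1) n).2.1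
    have hf1 : sPlus f m n ≤ f (m + 1, n) := inf_le_right
    have hf2 : sPlus f (m + 1) n ≤ f (m + 1, n) := inf_le_left
    obtain ⟨x, hx0, hxgen⟩ := finrank_eq_one_iff'.mp (hsp m n)
    obtain ⟨y, hy0, hygen⟩ := finrank_eq_one_iff'.mp (hsp (m + 1) n)
    have hxV : (x : V6) ∈ Submodule.span ℝ ({u, v, w} : Set V6) := by
      rw [← hDspan]; exact hD1 x.2
    have hyV : (y : V6) ∈ Submodule.span ℝ ({u, v, w} : Set V6) := by
      rw [← hDspan]; exact hD2 y.2
    have hiso := (hcontact (m + 1, n)).2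
    obtain ⟨t, ht⟩ := isotropic_dep huu hvv hww huv huw hvw hxV hyV
      (hiso x (hf1 x.2) x (hf1 x.2)) (hiso y (hf2 y.2) y (hf2 y.2))
      (hiso x (hf1 x.2) y (hf2 y.2))
      (fun h => hy0 (Subtype.ext h))
    have hle : sPlus f m n ≤ sPlus f (m + 1) n := by
      intro z hz
      obtain ⟨c, hc⟩ := hxgen ⟨z, hz⟩
      have hz' : z = c • (x : V6) := congrArg Subtype.val hc.symm
      rw [hz', ht, smul_smul]
      exact Submodule.smul_mem _ _ y.2
    exact Submodule.eq_of_le_of_finrank_eq hle (by rw [hsp m n, hsp (m + 1) n])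
  have all : ∀ n m : ℤ, sPlus f m n = sPlus f 0 n := by
    intro n m
    induction m using Int.induction_on with
    | zero => rfl
    | succ i ih => rw [← key i n]; exact ih
    | pred i ih =>
        have := key (-(i : ℤ) - 1) n
        rw [show (-(i : ℤ) - 1) + 1 = -(i : ℤ) by ring] at this
        rw [this]; exact ih
  refine ⟨fun n => sPlus f 0 n, fun n => ⟨hsp 0 n, fun x hx => ?_⟩, fun m n => ?_⟩
  · have hx' : x ∈ f (0, n) := (inf_le_left : sPlus f 0 n ≤ f (0, n)) hx
    exact (hcontact (0, n)).2 x hx' x hx'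
  · show sPlus f 0 n ≤ f (m, n)
    rw [← all n m]; exact inf_le_left
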